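/- Let H be finite-dimensional, and for each n let φ_n be a completely positive unital endomorphism of B(H^{⊗n}) commuting with permutations (φ_n(U_π* A U_π) = U_π* φ_n(A) U_π). Let {e_j}_{j∈J} be an orthonormal basis of H. Define Markov transition matrices K_n on J^n by K_n((j_1,…,j_n),(j'_1,…,j'_n)) = Tr[(P_{e_{j_1}} ⊗ ⋯ ⊗ P_{e_{j_n}}) φ_n(P_{e_{j'_1}} ⊗ ⋯ ⊗ P_{e_{j'_n}})]. If {φ_n} propagates quantum molecular chaos, then {K_n} propagates molecular chaos in the classical sense. -/

import Mathlib

open Filter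
open scoped BigOperators ComplexOrder

namespace QC

variable {α : Type*} [Fintype α] [DecidableEq α]

/-- The positive semidefinite square root (the old Mathlib `Matrix.PosSemidef.sqrt`). -/
noncomputable def psdSqrt {A : Matrix α α ℂ} (hA : A.PosSemidef) : Matrix α α ℂ :=
  hA.1.eigenvectorUnitary.1 * Matrix.diagonal ((↑) ∘ (√·) ∘ hA.1.eigenvalues) *
    (star hA.1.eigenvectorUnitary : Matrix α α ℂ)

/-- The trace norm (Schatten 1-norm) of a matrix: the trace of `√(AᴴA)`. -/
noncomputable def traceNorm (A : Matrix α α ℂ) : ℝ :=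
  (psdSqrt (Matrix.posSemidef_conjTranspose_mul_self A)).trace.re

/-- A density operator: a positive semidefinite matrix of trace one. -/
def IsDensity (A : Matrix α α ℂ) : Prop := A.PosSemidef ∧ A.trace = 1

variable {ι : Type*} [Fintype ι] [DecidableEq ι]

/-- Tensor product of `n` operators on `H`, as an operator on `H^{⊗n}`
(with `H = ℂ^ι`, and `H^{⊗n}` identified with `ℂ^(Fin n → ι)`). -/
def tprod {n : ℕ} (A : Fin n → Matrix ι ι ℂ) : Matrix (Fin n → ι) (Fin n → ι) ℂ :=
  Matrix.of fun x y => ∏ i, A i (x i) (y i)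

/-- `k`-fold tensor power of an operator. -/
def tpow (A : Matrix ι ι ℂ) (k : ℕ) : Matrix (Fin k → ι) (Fin k → ι) ℂ :=
  tprod (fun _ => A)

/-- Extend a multi-index on the first `k` coordinates by one on the last `n - k`. -/
def extend {k n : ℕ} (h : k ≤ n) (x : Fin k → ι) (z : Fin (n - k) → ι) : Fin n → ι :=
  fun i => if h' : (i : ℕ) < k then x ⟨i, h'⟩ else z ⟨(i : ℕ) - k, by
    have := i.isLt; omega⟩

/-- Partial trace over the last `n - k` tensor factors. -/
noncomputable def ptrace {k n : ℕ} (h : k ≤ n) (M : Matrix (Fin n → ι) (Fin n → ι) ℂ) :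
    Matrix (Fin k → ι) (Fin k → ι) ℂ :=
  Matrix.of fun x y => ∑ z : Fin (n - k) → ι, M (extend h x z) (extend h y z)

/-- The permutation unitary `U_π` on `H^{⊗n}`, `U_π (x₁ ⊗ ⋯ ⊗ xₙ) = x_{π(1)} ⊗ ⋯ ⊗ x_{π(n)}`. -/
def Umat {n : ℕ} (π : Equiv.Perm (Fin n)) : Matrix (Fin n → ι) (Fin n → ι) ℂ :=
  Matrix.of fun x y => if x = y ∘ π then 1 else 0

/-- `{D n}` is `E`-chaotic in the quantum sense: for each fixed `k` the `k`-marginals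
(partial traces) converge in trace norm to `E^{⊗k}`. -/
def QChaotic (D : ∀ n, Matrix (Fin n → ι) (Fin n → ι) ℂ) (E : Matrix ι ι ℂ) : Prop :=
  ∀ k : ℕ, Tendsto
    (fun n => traceNorm (ptrace (Nat.le_add_right k n) (D (k + n)) - tpow E k))
    atTop (nhds 0)

/-- Flatten a `d × d` matrix of operators on `H` into an operator on `ℂ^d ⊗ H`. -/
def blockify {d : ℕ} (M : Matrix (Fin d) (Fin d) (Matrix α α ℂ)) :
    Matrix (Fin d × α) (Fin d × α) ℂ :=
  Matrix.of fun p q => M p.1 q.1 p.2 q.2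

/-- Complete positivity: every finite matrix ampliation preserves positivity. -/
def IsCP (φ : Matrix α α ℂ →ₗ[ℂ] Matrix α α ℂ) : Prop :=
  ∀ (d : ℕ) (M : Matrix (Fin d) (Fin d) (Matrix α α ℂ)),
    (blockify M).PosSemidef → (blockify (M.map ⇑φ)).PosSemidef

/-- The predual (Schrödinger picture) of a map `φ` on `B(H)`, determined by
`Tr(φ⁎(D) A) = Tr(D φ(A))` for all `A`. -/
noncomputable def predual (φ : Matrix α α ℂ →ₗ[ℂ] Matrix α α ℂ) (D : Matrix α α ℂ) :
    Matrix α α ℂ :=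
  Matrix.of fun a b => (D * φ (Matrix.single b a 1)).trace

/-- `{φ_n}` propagates quantum molecular chaos: quantum molecular chaos of `{D_n}`
entails quantum molecular chaos of `{φ_{n*}(D_n)}`. -/
def PropagatesQMC
    (φ : ∀ n, Matrix (Fin n → ι) (Fin n → ι) ℂ →ₗ[ℂ] Matrix (Fin n → ι) (Fin n → ι) ℂ) :
    Prop :=
  ∀ (D : ∀ n, Matrix (Fin n → ι) (Fin n → ι) ℂ) (E : Matrix ι ι ℂ),
    (∀ n, IsDensity (D n)) →
    (∀ n (π : Equiv.Perm (Fin n)), D n * Umat π = Umat π * D n) →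
    IsDensity E → QChaotic D E →
    ∃ E' : Matrix ι ι ℂ, IsDensity E' ∧ QChaotic (fun n => predual (φ n) (D n)) E'

/-- The `k`-marginal of a probability distribution on `J^n`, `J` finite. -/
def cmarg {J : Type*} [Fintype J] {k n : ℕ} (h : k ≤ n) (p : (Fin n → J) → ℝ)
    (y : Fin k → J) : ℝ :=
  ∑ z : Fin (n - k) → J, p (extend h y z)

/-- `{p_n}` is `q`-chaotic (classically): marginals converge (weakly, i.e. pointwise on a
discrete space) to products. -/
def CChaotic {J : Type*} [Fintype J] (p : ∀ n, (Fin n → J) → ℝ) (q : J → ℝ) : Prop :=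
  ∀ (k : ℕ) (y : Fin k → J),
    Tendsto (fun n => cmarg (Nat.le_add_right k n) (p (k + n)) y)
      atTop (nhds (∏ i, q (y i)))

/-- A sequence of Markov transition matrices `{K_n}` on `J^n` propagates chaos
classically: it maps chaotic sequences of symmetric probability distributions to
chaotic sequences. -/
def PropagatesCMC {J : Type*} [Fintype J]
    (K : ∀ n, (Fin n → J) → (Fin n → J) → ℝ) : Prop :=
  ∀ (p : ∀ n, (Fin n → J) → ℝ) (q : J → ℝ),
    (∀ n x, 0 ≤ p n x) → (∀ n, ∑ x, p n x = 1) →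
    (∀ n (π : Equiv.Perm (Fin n)) (x : Fin n → J), p n (x ∘ π) = p n x) →
    (∀ j, 0 ≤ q j) → (∑ j, q j = 1) → CChaotic p q →
    ∃ q' : J → ℝ, (∀ j, 0 ≤ q' j) ∧ (∑ j, q' j = 1)
      ∧ CChaotic (fun n x' => ∑ x, p n x * K n x x') q'


/-! ### Auxiliary lemmas -/

lemma sandwich_apply (U : Matrix α α ℂ) (d : α → ℂ) (a b : α) :
    (U * Matrix.diagonal d * U.conjTranspose) a b
      = ∑ i, d i * (U a i * (starRingEnd ℂ) (U b i)) := by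
  simp only [Matrix.mul_apply, Matrix.diagonal_apply, Matrix.conjTranspose_apply, mul_ite,
    mul_zero, Finset.sum_ite_eq, Finset.mem_univ, if_true, Finset.sum_mul]
  refine Finset.sum_congr rfl fun i _ => ?_
  simp [RingHom.comp_apply]
  ring

/-- Any diagonal entry of a matrix is bounded in absolute value by the trace norm. -/
lemma entry_abs_le_traceNorm (M : Matrix α α ℂ) (a : α) :
    ‖M a a‖ ≤ traceNorm M := by
  classical
  set hP := Matrix.posSemidef_conjTranspose_mul_self M with hPdef
  set P := psdSqrt hP with hPeq
  have hH : (M.conjTranspose * M).IsHermitian := hP.1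
  set U : Matrix α α ℂ := (hH.eigenvectorUnitary : Matrix α α ℂ) with hU
  set μ : α → ℝ := fun i => √(hH.eigenvalues i) with hμ
  have hspec : P = U * Matrix.diagonal (RCLike.ofReal ∘ μ) * U.conjTranspose := by
    rfl
  have hUU : U.conjTranspose * U = 1 := by
    simpa [Matrix.star_eq_conjTranspose] using
      (Matrix.mem_unitaryGroup_iff').mp hH.eigenvectorUnitary.2
  have hUU' : U * U.conjTranspose = 1 := by
    simpa [Matrix.star_eq_conjTranspose] using
      (Matrix.mem_unitaryGroup_iff).mp hH.eigenvectorUnitary.2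
  have hP2 : P * P = U * Matrix.diagonal (fun i => ((μ i : ℂ))^2) * U.conjTranspose := by
    rw [hspec]
    have : (U * Matrix.diagonal (RCLike.ofReal ∘ μ) * U.conjTranspose) *
        (U * Matrix.diagonal (RCLike.ofReal ∘ μ) * U.conjTranspose)
        = U * (Matrix.diagonal (RCLike.ofReal ∘ μ) * (U.conjTranspose * U) *
            Matrix.diagonal (RCLike.ofReal ∘ μ)) * U.conjTranspose := by
      noncomm_ring
    rw [this, hUU, mul_one, Matrix.diagonal_mul_diagonal]
    congr 1
    congr 1
    funext i
    simp [sq]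
  have hMM : P * P = M.conjTranspose * M := by
    have hs : M.conjTranspose * M
        = U * Matrix.diagonal (RCLike.ofReal ∘ hH.eigenvalues) * U.conjTranspose := by
      simpa [Matrix.star_eq_conjTranspose] using hH.spectral_theorem
    rw [hP2, hs]
    congr 1
    congr 1
    congr 1
    funext i
    have h : √(hH.eigenvalues i) ^ 2 = hH.eigenvalues i := Real.sq_sqrt (hP.eigenvalues_nonneg i)
    simp only [Function.comp_apply, hμ]
    rw [← Complex.ofReal_pow, h]
    rfl
  have h1 : (‖M a a‖)^2 ≤ ((M.conjTranspose * M) a a).re := by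
    have : (M.conjTranspose * M) a a = ∑ b, (starRingEnd ℂ) (M b a) * M b a := by
      simp [Matrix.mul_apply, Matrix.conjTranspose_apply]
    rw [this]
    rw [Complex.re_sum]
    have hterm : ∀ b, ((starRingEnd ℂ) (M b a) * M b a).re = Complex.normSq (M b a) := by
      intro b
      rw [← Complex.normSq_eq_conj_mul_self]
      simp
    rw [Finset.sum_congr rfl (fun b _ => hterm b)]
    have : (‖M a a‖)^2 = Complex.normSq (M a a) := Complex.sq_norm _
    rw [this]
    exact Finset.single_le_sum (f := fun b => Complex.normSq (M b a))
      (fun b _ => Complex.normSq_nonneg _) (Finset.mem_univ a)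
  have h2 : ((P * P) a a).re = ∑ i, (μ i)^2 * Complex.normSq (U a i) := by
    rw [hP2, sandwich_apply, Complex.re_sum]
    refine Finset.sum_congr rfl fun i _ => ?_
    rw [Complex.mul_conj, ← Complex.ofReal_pow, ← Complex.ofReal_mul, Complex.ofReal_re]
  have hrow : ∀ i, Complex.normSq (U a i) ≤ 1 := by
    intro i
    have h11 : (U * U.conjTranspose) a a = 1 := by rw [hUU']; simp
    have : ∑ j, Complex.normSq (U a j) = 1 := by
      have : ((U * U.conjTranspose) a a).re = 1 := by rw [h11]; simp
      rw [Matrix.mul_apply] at this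
      rw [← this, Complex.re_sum]
      refine Finset.sum_congr rfl fun j _ => ?_
      rw [Matrix.conjTranspose_apply,
        show star (U a j) = (starRingEnd ℂ) (U a j) from rfl, Complex.mul_conj]
      simp
    calc Complex.normSq (U a i) ≤ ∑ j, Complex.normSq (U a j) :=
          Finset.single_le_sum (fun j _ => Complex.normSq_nonneg _) (Finset.mem_univ i)
      _ = 1 := this
  have hμnn : ∀ i, 0 ≤ μ i := fun i => Real.sqrt_nonneg _
  have htr : traceNorm M = ∑ i, μ i := by
    show P.trace.re = _
    have : P.trace = Matrix.trace (Matrix.diagonal (RCLike.ofReal ∘ μ : α → ℂ)) := by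
      rw [hspec, Matrix.trace_mul_cycle, hUU, one_mul]
    rw [this, Matrix.trace_diagonal, Complex.re_sum]
    simp
  have hsum1 : ∑ i, (μ i)^2 * Complex.normSq (U a i) ≤ ∑ i, (μ i)^2 := by
    refine Finset.sum_le_sum fun i _ => ?_
    nlinarith [hrow i, sq_nonneg (μ i), Complex.normSq_nonneg (U a i)]
  have hsum2 : ∑ i, (μ i)^2 ≤ (∑ i, μ i)^2 := by
    have : ∀ i ∈ Finset.univ, (μ i)^2 ≤ μ i * ∑ j, μ j := by
      intro i _
      have hle : μ i ≤ ∑ j, μ j :=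
        Finset.single_le_sum (fun j _ => hμnn j) (Finset.mem_univ i)
      nlinarith [hμnn i]
    calc ∑ i, (μ i)^2 ≤ ∑ i, μ i * ∑ j, μ j := Finset.sum_le_sum this
      _ = (∑ i, μ i)^2 := by rw [← Finset.sum_mul, sq]
  have hfinal : (‖M a a‖)^2 ≤ (traceNorm M)^2 := by
    calc (‖M a a‖)^2 ≤ ((M.conjTranspose * M) a a).re := h1
      _ = ((P * P) a a).re := by rw [hMM]
      _ = ∑ i, (μ i)^2 * Complex.normSq (U a i) := h2
      _ ≤ ∑ i, (μ i)^2 := hsum1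
      _ ≤ (∑ i, μ i)^2 := hsum2
      _ = (traceNorm M)^2 := by rw [htr]
  have htrnn : 0 ≤ traceNorm M := by
    rw [htr]; exact Finset.sum_nonneg fun i _ => hμnn i
  nlinarith [norm_nonneg (M a a), hfinal, htrnn]

/-- The trace norm of a diagonal matrix is the sum of absolute values of the entries. -/
lemma traceNorm_diagonal (d : α → ℂ) :
    traceNorm (Matrix.diagonal d) = ∑ i, ‖d i‖ := by
  set hP := Matrix.posSemidef_conjTranspose_mul_self (Matrix.diagonal d) with hPdef
  have hH : ((Matrix.diagonal d).conjTranspose * Matrix.diagonal d).IsHermitian := hP.1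
  set U : Matrix α α ℂ := (hH.eigenvectorUnitary : Matrix α α ℂ) with hU
  set lam : α → ℝ := hH.eigenvalues with hlam
  have hUU : U.conjTranspose * U = 1 :=
    (Matrix.mem_unitaryGroup_iff').mp hH.eigenvectorUnitary.2
  have hUU' : U * U.conjTranspose = 1 :=
    (Matrix.mem_unitaryGroup_iff).mp hH.eigenvectorUnitary.2
  have hs : (Matrix.diagonal d).conjTranspose * Matrix.diagonal d
      = U * Matrix.diagonal (RCLike.ofReal ∘ lam) * U.conjTranspose := by
    have h := hH.spectral_theorem
    rw [Unitary.conjStarAlgAut_apply] at h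
    exact h
  have hC : (Matrix.diagonal d).conjTranspose * Matrix.diagonal d
      = Matrix.diagonal (fun i => ((Complex.normSq (d i) : ℝ) : ℂ)) := by
    rw [Matrix.diagonal_conjTranspose, Matrix.diagonal_mul_diagonal]
    congr 1
    funext i
    rw [Complex.normSq_eq_conj_mul_self]
    rfl
  have hCU : (Matrix.diagonal d).conjTranspose * Matrix.diagonal d * U
      = U * Matrix.diagonal (RCLike.ofReal ∘ lam) := by
    rw [hs, _root_.mul_assoc (U * Matrix.diagonal (RCLike.ofReal ∘ lam)), hUU, Matrix.mul_one]
  have he : ∀ i k, ((Complex.normSq (d i) : ℝ) : ℂ) * U i k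
      = U i k * (RCLike.ofReal ∘ lam) k := by
    intro i k
    have := congrFun (congrFun hCU i) k
    rw [hC, Matrix.diagonal_mul, Matrix.mul_diagonal] at this
    exact this
  have key : ∀ i k, Complex.normSq (U i k) * √(lam k) = Complex.normSq (U i k) * ‖d i‖ := by
    intro i k
    by_cases h0 : U i k = 0
    · simp [h0]
    · have h1 : ((Complex.normSq (d i) : ℝ) : ℂ) = ((lam k : ℝ) : ℂ) := by
        have := he i k
        rw [mul_comm] at this
        exact mul_left_cancel₀ h0 this
      have h2 : Complex.normSq (d i) = lam k := Complex.ofReal_injective h1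
      rw [← h2, Complex.normSq_eq_norm_sq (d i), Real.sqrt_sq (norm_nonneg _)]
  have hrow : ∀ i, ∑ k, Complex.normSq (U i k) = 1 := by
    intro i
    have : ((U * U.conjTranspose) i i).re = 1 := by rw [hUU']; simp
    rw [Matrix.mul_apply, Complex.re_sum] at this
    rw [← this]
    refine Finset.sum_congr rfl fun j _ => ?_
    rw [Matrix.conjTranspose_apply,
      show star (U i j) = (starRingEnd ℂ) (U i j) from rfl, Complex.mul_conj]
    simp
  have hcol : ∀ k, ∑ i, Complex.normSq (U i k) = 1 := by
    intro k
    have : ((U.conjTranspose * U) k k).re = 1 := by rw [hUU]; simp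
    rw [Matrix.mul_apply, Complex.re_sum] at this
    rw [← this]
    refine Finset.sum_congr rfl fun j _ => ?_
    rw [Matrix.conjTranspose_apply,
      show star (U j k) = (starRingEnd ℂ) (U j k) from rfl, mul_comm, Complex.mul_conj]
    simp
  have htr : (psdSqrt hP).trace = ∑ k, ((√(lam k) : ℝ) : ℂ) := by
    have hsp : psdSqrt hP
        = U * Matrix.diagonal (fun k => ((√(lam k) : ℝ) : ℂ)) * U.conjTranspose := rfl
    rw [hsp, Matrix.trace_mul_cycle, hUU, one_mul, Matrix.trace_diagonal]
  unfold traceNorm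
  rw [htr, Complex.re_sum]
  simp only [Complex.ofReal_re]
  calc ∑ k, √(lam k) = ∑ k, √(lam k) * ∑ i, Complex.normSq (U i k) := by
        refine Finset.sum_congr rfl fun k _ => ?_
        rw [hcol k, mul_one]
    _ = ∑ k, ∑ i, Complex.normSq (U i k) * √(lam k) := by
        refine Finset.sum_congr rfl fun k _ => ?_
        rw [Finset.mul_sum]
        refine Finset.sum_congr rfl fun i _ => ?_
        ring
    _ = ∑ i, ∑ k, Complex.normSq (U i k) * ‖d i‖ := by
        rw [Finset.sum_comm]
        exact Finset.sum_congr rfl fun i _ => Finset.sum_congr rfl fun k _ => key i k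
    _ = ∑ i, ‖d i‖ := by
        refine Finset.sum_congr rfl fun i _ => ?_
        rw [← Finset.sum_mul, hrow i, one_mul]

lemma psd_diag_nonneg {M : Matrix α α ℂ} (hM : M.PosSemidef) (j : α) : 0 ≤ M j j := by
  exact hM.diag_nonneg

variable {J : Type*} [Fintype J] [DecidableEq J]

lemma extend_apply_lt {k n : ℕ} (h : k ≤ n) (x : Fin k → J) (z : Fin (n - k) → J) (i : Fin k) :
    extend h x z ⟨(i : ℕ), lt_of_lt_of_le i.isLt h⟩ = x i := by
  simp [extend]

lemma extend_ne {k n : ℕ} (h : k ≤ n) {x y : Fin k → J} (z w : Fin (n - k) → J)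
    (hxy : x ≠ y) : extend h x z ≠ extend h y w := by
  obtain ⟨i, hi⟩ := Function.ne_iff.mp hxy
  intro hc
  apply hi
  have := congrFun hc ⟨(i : ℕ), lt_of_lt_of_le i.isLt h⟩
  rwa [extend_apply_lt, extend_apply_lt] at this

lemma ptrace_diagonal {k n : ℕ} (h : k ≤ n) (D : (Fin n → J) → ℂ) :
    ptrace (ι := J) h (Matrix.diagonal D)
      = Matrix.diagonal (fun y => ∑ z : Fin (n - k) → J, D (extend h y z)) := by
  ext x y
  rcases eq_or_ne x y with rfl | hxy
  · simp only [ptrace, Matrix.of_apply, Matrix.diagonal_apply_eq]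
  · rw [Matrix.diagonal_apply_ne _ hxy]
    simp only [ptrace, Matrix.of_apply]
    refine Finset.sum_eq_zero fun z _ => ?_
    exact Matrix.diagonal_apply_ne _ (extend_ne h z z hxy)

lemma tpow_diagonal (d : J → ℂ) (k : ℕ) :
    tpow (Matrix.diagonal d) k = Matrix.diagonal (fun y : Fin k → J => ∏ i, d (y i)) := by
  ext x y
  rcases eq_or_ne x y with rfl | hxy
  · simp [tpow, tprod]
  · rw [Matrix.diagonal_apply_ne _ hxy]
    obtain ⟨i, hi⟩ := Function.ne_iff.mp hxy
    exact Finset.prod_eq_zero (Finset.mem_univ i) (Matrix.diagonal_apply_ne _ hi)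

lemma tprod_stdBasis {n : ℕ} (x : Fin n → J) :
    tprod (fun i => Matrix.single (x i) (x i) (1 : ℂ))
      = Matrix.single x x 1 := by
  ext a b
  simp only [tprod, Matrix.of_apply, Matrix.single]
  by_cases hab : x = a ∧ x = b
  · obtain ⟨rfl, rfl⟩ := hab
    simp
  · rw [if_neg hab]
    rcases not_and_or.mp hab with hx | hx
    · obtain ⟨i, hi⟩ := Function.ne_iff.mp hx
      exact Finset.prod_eq_zero (Finset.mem_univ i) (by simp [hi])
    · obtain ⟨i, hi⟩ := Function.ne_iff.mp hx
      exact Finset.prod_eq_zero (Finset.mem_univ i) (by simp [hi])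

lemma trace_stdBasis_mul (x : α) (A : Matrix α α ℂ) :
    (Matrix.single x x (1 : ℂ) * A).trace = A x x := by
  simp [Matrix.trace, Matrix.diag, Matrix.mul_apply, Matrix.single, ite_and,
    Finset.sum_ite_eq]

lemma trace_diagonal_mul (d : α → ℂ) (A : Matrix α α ℂ) :
    (Matrix.diagonal d * A).trace = ∑ x, d x * A x x := by
  simp [Matrix.trace, Matrix.diag, Matrix.diagonal_mul]

/-- **Quantum propagation of chaos yields classical propagation of chaos
(periodic measurement of complete observables, finite dimensions).**
For completely positive unital permutation-covariant maps `φ_n` on `B(H^{⊗n})`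
(`H = ℂ^ι` finite dimensional) and an orthonormal basis `{e_j}_{j∈ι}`, define
`K_n(j⃗, j⃗') = Tr[(P_{e_{j₁}} ⊗ ⋯ ⊗ P_{e_{jₙ}}) φ_n(P_{e_{j'₁}} ⊗ ⋯ ⊗ P_{e_{j'ₙ}})]`.
If `{φ_n}` propagates quantum molecular chaos, then `{K_n}` propagates molecular chaos
in the classical sense. -/
theorem quantum_to_classical_propagation
    (φ : ∀ n, Matrix (Fin n → ι) (Fin n → ι) ℂ →ₗ[ℂ] Matrix (Fin n → ι) (Fin n → ι) ℂ)
    (hcp : ∀ n, IsCP (φ n)) (hunital : ∀ n, φ n 1 = 1)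
    (hperm : ∀ n (π : Equiv.Perm (Fin n)) (A : Matrix (Fin n → ι) (Fin n → ι) ℂ),
      φ n ((Umat π).conjTranspose * A * Umat π) = (Umat π).conjTranspose * φ n A * Umat π)
    (hqmc : PropagatesQMC φ) :
    PropagatesCMC (fun n x x' =>
      ((tprod fun i => Matrix.single (x i) (x i) (1 : ℂ)) *
        φ n (tprod fun i => Matrix.single (x' i) (x' i) (1 : ℂ))).trace.re) := by
  classical
  intro p q hp0 hp1 hpsym hq0 hq1 hchaos
  set Dd : ∀ n, Matrix (Fin n → ι) (Fin n → ι) ℂ :=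
    fun n => Matrix.diagonal (fun x => (p n x : ℂ)) with hDd
  set E : Matrix ι ι ℂ := Matrix.diagonal (fun j => (q j : ℂ)) with hEdef
  have hcast : ∀ r : ℝ, 0 ≤ r → (0 : ℂ) ≤ (r : ℂ) := by
    intro r hr; rw [Complex.le_def]; simp [hr]
  have hDden : ∀ n, IsDensity (Dd n) := by
    intro n
    constructor
    · exact Matrix.posSemidef_diagonal_iff.mpr fun x => hcast _ (hp0 n x)
    · rw [hDd]; simp only [Matrix.trace_diagonal]
      rw [← Complex.ofReal_sum]
      rw [hp1 n]; simp
  have hDsym : ∀ n (π : Equiv.Perm (Fin n)), Dd n * Umat π = Umat π * Dd n := by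
    intro n π
    ext x y
    rw [Matrix.diagonal_mul, Matrix.mul_diagonal]
    by_cases hxy : x = y ∘ π
    · have hpx : p n x = p n y := by rw [hxy]; exact hpsym n π y
      simp [Umat, hxy, hpx, hpsym n π y]
    · simp [Umat, hxy]
  have hEden : IsDensity E := by
    constructor
    · exact Matrix.posSemidef_diagonal_iff.mpr fun j => hcast _ (hq0 j)
    · rw [hEdef]; simp only [Matrix.trace_diagonal]
      rw [← Complex.ofReal_sum, hq1]; simp
  have hDqc : QChaotic Dd E := by
    intro k
    have hkey : ∀ n : ℕ,
        traceNorm (ptrace (Nat.le_add_right k n) (Dd (k + n)) - tpow E k)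
          = ∑ y : Fin k → ι,
              |cmarg (Nat.le_add_right k n) (p (k + n)) y - ∏ i, q (y i)| := by
      intro n
      rw [hDd, hEdef]
      rw [ptrace_diagonal, tpow_diagonal, Matrix.diagonal_sub, traceNorm_diagonal]
      refine Finset.sum_congr rfl fun y _ => ?_
      have h1 : (∑ z : Fin (k + n - k) → ι, ((p (k + n) (extend (Nat.le_add_right k n) y z) : ℝ) : ℂ))
          = ((cmarg (Nat.le_add_right k n) (p (k + n)) y : ℝ) : ℂ) := by
        rw [cmarg, Complex.ofReal_sum]
      have h2 : (∏ i, ((q (y i) : ℝ) : ℂ)) = ((∏ i, q (y i) : ℝ) : ℂ) := by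
        rw [Complex.ofReal_prod]
      rw [h1, h2, ← Complex.ofReal_sub, Complex.norm_real, Real.norm_eq_abs]
    simp only [hkey]
    have h0 : ∀ y : Fin k → ι,
        Tendsto (fun n => |cmarg (Nat.le_add_right k n) (p (k + n)) y - ∏ i, q (y i)|)
          atTop (nhds 0) := by
      intro y
      have := (hchaos k y).sub (tendsto_const_nhds (x := ∏ i, q (y i)))
      rw [sub_self] at this
      have habs := this.abs
      simpa using habs
    have := tendsto_finset_sum Finset.univ (fun y _ => h0 y)
    simpa using this
  obtain ⟨E', hE'den, hqc'⟩ := hqmc Dd E hDden hDsym hEden hDqc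
  have hE'diag : ∀ j, E' j j = ((E' j j).re : ℂ) := by
    intro j
    have h := psd_diag_nonneg hE'den.1 j
    rw [Complex.le_def] at h
    exact Complex.ext rfl h.2.symm
  refine ⟨fun j => (E' j j).re, ?_, ?_, ?_⟩
  · intro j
    have h := psd_diag_nonneg hE'den.1 j
    rw [Complex.le_def] at h
    simpa using h.1
  · have := hE'den.2
    have h : (Matrix.trace E').re = 1 := by rw [this]; simp
    rw [← h, Matrix.trace, Complex.re_sum]
    rfl
  · intro k y
    set c : ℝ := ∏ i, (E' (y i) (y i)).re with hc
    have hmarg : ∀ n : ℕ,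
        cmarg (Nat.le_add_right k n)
            (fun x' => ∑ x, p (k + n) x *
              ((tprod fun i => Matrix.single (x i) (x i) (1 : ℂ)) *
                φ (k + n) (tprod fun i => Matrix.single (x' i) (x' i) (1 : ℂ))).trace.re) y
          = ((ptrace (Nat.le_add_right k n) (predual (φ (k + n)) (Dd (k + n)))) y y).re := by
      intro n
      have hpt : ∀ x' : Fin (k + n) → ι,
          (∑ x, p (k + n) x *
              ((tprod fun i => Matrix.single (x i) (x i) (1 : ℂ)) *
                φ (k + n) (tprod fun i => Matrix.single (x' i) (x' i) (1 : ℂ))).trace.re)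
            = ((predual (φ (k + n)) (Dd (k + n))) x' x').re := by
        intro x'
        have hterm : ∀ x : Fin (k + n) → ι,
            ((tprod fun i => Matrix.single (x i) (x i) (1 : ℂ)) *
              φ (k + n) (tprod fun i => Matrix.single (x' i) (x' i) (1 : ℂ))).trace
            = (φ (k + n) (Matrix.single x' x' 1)) x x := by
          intro x
          rw [tprod_stdBasis, tprod_stdBasis, trace_stdBasis_mul]
        simp only [hterm]
        rw [predual, Matrix.of_apply, hDd, trace_diagonal_mul, Complex.re_sum]
        refine Finset.sum_congr rfl fun x _ => ?_
        rw [Complex.re_ofReal_mul]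
      rw [cmarg]
      simp only [hpt]
      rw [ptrace, Matrix.of_apply, Complex.re_sum]
    have htpow : ∀ n : ℕ, ((tpow E' k) y y).re = c := by
      intro n
      have : (tpow E' k) y y = ∏ i, E' (y i) (y i) := by
        simp [tpow, tprod]
      rw [this]
      have : (∏ i, E' (y i) (y i)) = ((∏ i, (E' (y i) (y i)).re : ℝ) : ℂ) := by
        rw [Complex.ofReal_prod]
        exact Finset.prod_congr rfl fun i _ => hE'diag (y i)
      rw [this, Complex.ofReal_re, hc]
    have hdiff : Tendsto (fun n =>
        cmarg (Nat.le_add_right k n)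
            (fun x' => ∑ x, p (k + n) x *
              ((tprod fun i => Matrix.single (x i) (x i) (1 : ℂ)) *
                φ (k + n) (tprod fun i => Matrix.single (x' i) (x' i) (1 : ℂ))).trace.re) y
          - c) atTop (nhds 0) := by
      apply squeeze_zero_norm (a := fun n =>
        traceNorm (ptrace (Nat.le_add_right k n) (predual (φ (k + n)) (Dd (k + n))) - tpow E' k))
      · intro n
        rw [hmarg n, ← htpow n]
        rw [Real.norm_eq_abs, ← Complex.sub_re, ← Matrix.sub_apply]
        exact (Complex.abs_re_le_norm _).trans (entry_abs_le_traceNorm _ _)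
      · exact hqc' k
    have := hdiff.add (tendsto_const_nhds (x := c))
    simpa using this
  

end QC
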